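/- arXiv:2003.00630 — 9 statements merged into one kernel-verified Lean document; each statement's English description precedes it below -/
import Mathlib

section
/- Fix a nonempty finite set y ⊆ [n], c̄ : [n] → ℝ, θ ≥ 0, r ≥ 1, and let t*(y) = max{ t : Σ_{j ∈ y, t ≥ c̄_j} (t − c̄_j)^r ≤ θ^r }. Then min_{j∈y} c̄_j + θ/|y|^{1/r} ≤ t*(y) ≤ min_{j∈y} c̄_j + θ. -/
/-- Bounds on the optimal value `t*(y)` of the robust bottleneck inner
problem: `min_{j∈y} c̄_j + θ/|y|^{1/r} ≤ t*(y) ≤ min_{j∈y} c̄_j + θ`. -/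
theorem robust_bottleneck_inner_bounds (n : ℕ) (y : Finset (Fin n))
    (hy : y.Nonempty) (cbar : Fin n → ℝ) (θ r tstar : ℝ) (hθ : 0 ≤ θ) (hr : 1 ≤ r)
    (ht : IsGreatest
      {t : ℝ | ∑ j ∈ y.filter (fun j => cbar j ≤ t), (t - cbar j) ^ r ≤ θ ^ r}
      tstar) :
    y.inf' hy cbar + θ / (y.card : ℝ) ^ (1 / r) ≤ tstar ∧
      tstar ≤ y.inf' hy cbar + θ := by
  obtain ⟨hmem, hub⟩ := ht
  set m := y.inf' hy cbar with hm
  obtain ⟨j0, hj0, hj0m⟩ := y.exists_mem_eq_inf' hy cbar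
  have hr0 : (0:ℝ) < r := lt_of_lt_of_le one_pos hr
  have hcard : (0:ℝ) < (y.card : ℝ) := by
    exact_mod_cast Finset.card_pos.mpr hy
  have hcardp : (0:ℝ) < ((y.card : ℝ)) ^ (1/r) := Real.rpow_pos_of_pos hcard _
  constructor
  · -- lower bound
    apply hub
    simp only [Set.mem_setOf_eq]
    set t0 := m + θ / (y.card : ℝ) ^ (1/r) with ht0
    have hterm : ∀ j ∈ y.filter (fun j => cbar j ≤ t0),
        (t0 - cbar j) ^ r ≤ θ ^ r / (y.card : ℝ) := by
      intro j hj
      rw [Finset.mem_filter] at hj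
      have hmj : m ≤ cbar j := Finset.inf'_le cbar hj.1
      have h2 : 0 ≤ t0 - cbar j := by linarith [hj.2]
      have h1 : t0 - cbar j ≤ t0 - m := by linarith
      calc (t0 - cbar j) ^ r ≤ (t0 - m) ^ r := Real.rpow_le_rpow h2 h1 hr0.le
        _ = (θ / (y.card : ℝ) ^ (1/r)) ^ r := by rw [ht0]; ring_nf
        _ = θ ^ r / ((y.card : ℝ) ^ (1/r)) ^ r :=
            Real.div_rpow hθ hcardp.le _
        _ = θ ^ r / (y.card : ℝ) := by
            rw [← Real.rpow_mul hcard.le, one_div_mul_cancel hr0.ne', Real.rpow_one]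
    calc ∑ j ∈ y.filter (fun j => cbar j ≤ t0), (t0 - cbar j) ^ r
        ≤ (y.filter (fun j => cbar j ≤ t0)).card • (θ ^ r / (y.card : ℝ)) :=
          Finset.sum_le_card_nsmul _ _ _ hterm
      _ = ((y.filter (fun j => cbar j ≤ t0)).card : ℝ) * (θ ^ r / (y.card : ℝ)) := by
          rw [nsmul_eq_mul]
      _ ≤ (y.card : ℝ) * (θ ^ r / (y.card : ℝ)) := by
          apply mul_le_mul_of_nonneg_right
          · exact_mod_cast Finset.card_filter_le _ _
          · positivity
      _ = θ ^ r := by field_simp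
  · -- upper bound
    by_contra hcon
    push_neg at hcon
    have hθlt : θ < tstar - m := by linarith
    have hmle : m ≤ tstar := by linarith
    have hj0f : j0 ∈ y.filter (fun j => cbar j ≤ tstar) := by
      rw [Finset.mem_filter]
      exact ⟨hj0, le_trans hj0m.symm.le hmle⟩
    have hsingle : (tstar - cbar j0) ^ r ≤
        ∑ j ∈ y.filter (fun j => cbar j ≤ tstar), (tstar - cbar j) ^ r := by
      apply Finset.single_le_sum _ hj0f
      intro i hi
      rw [Finset.mem_filter] at hi
      exact Real.rpow_nonneg (by linarith [hi.2]) _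
    have hlt : θ ^ r < (tstar - m) ^ r := Real.rpow_lt_rpow hθ hθlt hr0
    have heq : cbar j0 = m := hj0m.symm
    rw [heq] at hsingle
    simp only [Set.mem_setOf_eq] at hmem
    linarith
end

section
/- Let F be a finite nonempty family of nonempty subsets of [n], let c̄^1,...,c̄^N : [n] → ℝ, θ ≥ 0, r ≥ 1. Define v_U = (1/N) Σ_{k=1}^N max_{y ∈ F} max{ min_{j∈y} c_j : ‖c − c̄^k‖_r ≤ θ } and v^{SAA} = (1/N) Σ_{k=1}^N max_{y ∈ F} min_{j∈y} c̄^k_j. Then θ / (max_{y∈F} |y|^{1/r}) ≤ v_U − v^{SAA} ≤ θ. -/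
/-- The ℓ_r norm on `Fin n → ℝ` for a real exponent `r`. -/
noncomputable def lpNorm {n : ℕ} (r : ℝ) (v : Fin n → ℝ) : ℝ :=
  (∑ j, |v j| ^ r) ^ (1 / r)

lemma lp_abs_le {n : ℕ} {r θ : ℝ} (hr : 1 ≤ r) (v : Fin n → ℝ)
    (hv : lpNorm r v ≤ θ) (j : Fin n) : |v j| ≤ θ := by
  have hr0 : (0:ℝ) < r := lt_of_lt_of_le one_pos hr
  have h1 : |v j| = (|v j| ^ r) ^ (1/r) := by
    rw [← Real.rpow_mul (abs_nonneg _), mul_one_div_cancel hr0.ne', Real.rpow_one]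
  rw [h1]
  refine le_trans (Real.rpow_le_rpow (Real.rpow_nonneg (abs_nonneg _) r) ?_
    (by positivity)) hv
  exact Finset.single_le_sum (fun i _ => Real.rpow_nonneg (abs_nonneg _) r)
    (Finset.mem_univ j)

/-- With `v_U` the DRBCP-U value (inner maximization over an ℓ_r ball of
radius θ around each sample) and `v^{SAA}` its sample-average counterpart,
`θ / max_{y∈F} |y|^{1/r} ≤ v_U − v^{SAA} ≤ θ`. -/
theorem drbcp_u_saa_bounds (n N : ℕ) (hN : 0 < N)
    (F : Finset (Finset (Fin n))) (hF : F.Nonempty) (hne : ∀ y ∈ F, y.Nonempty)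
    (cbar : Fin N → Fin n → ℝ) (θ r : ℝ) (hθ : 0 ≤ θ) (hr : 1 ≤ r)
    (vU vSAA : ℝ)
    (hvU : vU = (1 / N : ℝ) * ∑ k : Fin N,
      sSup {t : ℝ | ∃ y ∈ F, ∃ c : Fin n → ℝ,
        lpNorm r (fun j => c j - cbar k j) ≤ θ ∧ t = sInf (c '' ↑y)})
    (hvSAA : vSAA = (1 / N : ℝ) * ∑ k : Fin N,
      sSup {t : ℝ | ∃ y ∈ F, t = sInf (cbar k '' ↑y)}) :
    θ / (F.sup' hF fun y => ((y.card : ℝ) ^ (1 / r))) ≤ vU - vSAA ∧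
      vU - vSAA ≤ θ := by
  have hr0 : (0:ℝ) < r := lt_of_lt_of_le one_pos hr
  set M : ℝ := F.sup' hF fun y => ((y.card : ℝ) ^ (1 / r)) with hMdef
  have hM : 0 < M := by
    obtain ⟨y0, hy0⟩ := hF
    have hc0 : (0:ℝ) < ((y0.card : ℝ) ^ (1 / r)) := by
      have : 0 < y0.card := Finset.card_pos.mpr (hne y0 hy0)
      positivity
    exact lt_of_lt_of_le hc0 (Finset.le_sup' (fun y => ((y.card : ℝ) ^ (1 / r))) hy0)
  set S : Fin N → ℝ := fun k => sSup {t : ℝ | ∃ y ∈ F, ∃ c : Fin n → ℝ,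
      lpNorm r (fun j => c j - cbar k j) ≤ θ ∧ t = sInf (c '' ↑y)} with hSdef
  set T : Fin N → ℝ := fun k => sSup {t : ℝ | ∃ y ∈ F, t = sInf (cbar k '' ↑y)}
    with hTdef
  have key : ∀ k : Fin N, θ / M ≤ S k - T k ∧ S k - T k ≤ θ := by
    intro k
    -- rewrite T k as a finite sup'
    have hTset : {t : ℝ | ∃ y ∈ F, t = sInf (cbar k '' ↑y)} =
        (fun y : Finset (Fin n) => sInf (cbar k '' (↑y : Set (Fin n)))) '' (↑F : Set (Finset (Fin n))) := by
      ext t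
      simp only [Set.mem_setOf_eq, Set.mem_image, Finset.mem_coe]
      constructor
      · rintro ⟨y, hy, rfl⟩; exact ⟨y, hy, rfl⟩
      · rintro ⟨y, hy, rfl⟩; exact ⟨y, hy, rfl⟩
    have hT : T k = F.sup' hF (fun y => sInf (cbar k '' ↑y)) := by
      simp only [hTdef]; rw [hTset]; exact (Finset.sup'_eq_csSup_image F hF _).symm
    -- T k dominates each element and is attained
    have hTle : ∀ y ∈ F, sInf (cbar k '' ↑y) ≤ T k := by
      intro y hy; rw [hT]; exact Finset.le_sup' (s := F) (fun y => sInf (cbar k '' (↑y : Set (Fin n)))) hy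
    -- upper bound on elements of the S-set
    have hub : ∀ t ∈ {t : ℝ | ∃ y ∈ F, ∃ c : Fin n → ℝ,
        lpNorm r (fun j => c j - cbar k j) ≤ θ ∧ t = sInf (c '' ↑y)},
        t ≤ T k + θ := by
      rintro t ⟨y, hy, c, hc, rfl⟩
      have hyne := hne y hy
      rw [← Finset.inf'_eq_csInf_image y hyne]
      obtain ⟨j0, hj0, hj0v⟩ := Finset.exists_mem_eq_inf' hyne (cbar k)
      have h1 : y.inf' hyne c ≤ c j0 := Finset.inf'_le _ hj0
      have h2 : |c j0 - cbar k j0| ≤ θ := lp_abs_le hr _ hc j0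
      have h3 : y.inf' hyne (cbar k) ≤ T k := by
        rw [Finset.inf'_eq_csInf_image y hyne]; exact hTle y hy
      have := abs_le.mp h2
      rw [← hj0v] at *
      linarith [this.2]
    have hSne : {t : ℝ | ∃ y ∈ F, ∃ c : Fin n → ℝ,
        lpNorm r (fun j => c j - cbar k j) ≤ θ ∧ t = sInf (c '' ↑y)}.Nonempty := by
      obtain ⟨y0, hy0⟩ := hF
      refine ⟨sInf (cbar k '' ↑y0), y0, hy0, cbar k, ?_, rfl⟩
      have : lpNorm r (fun j => cbar k j - cbar k j) = 0 := by
        simp [lpNorm, Real.zero_rpow hr0.ne', Real.zero_rpow (inv_ne_zero hr0.ne')]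
      rw [this]; exact hθ
    have hSbdd : BddAbove {t : ℝ | ∃ y ∈ F, ∃ c : Fin n → ℝ,
        lpNorm r (fun j => c j - cbar k j) ≤ θ ∧ t = sInf (c '' ↑y)} := ⟨T k + θ, hub⟩
    constructor
    · -- lower bound: construct a perturbed c
      obtain ⟨ys, hys, hysv⟩ := Finset.exists_mem_eq_sup' hF
        (fun y => sInf (cbar k '' ↑y))
      have hysne := hne ys hys
      set δ : ℝ := θ / M with hδdef
      have hδ : 0 ≤ δ := div_nonneg hθ hM.le
      set c : Fin n → ℝ := fun j => cbar k j + if j ∈ ys then δ else 0 with hcdef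
      have hnorm : lpNorm r (fun j => c j - cbar k j) ≤ θ := by
        have hsum : (∑ j, |(c j - cbar k j)| ^ r) = (ys.card : ℝ) * δ ^ r := by
          have : ∀ j : Fin n, |(c j - cbar k j)| ^ r =
              if j ∈ ys then δ ^ r else 0 := by
            intro j
            simp only [hcdef, add_sub_cancel_left]
            split_ifs with h
            · rw [abs_of_nonneg hδ]
            · simp [Real.zero_rpow hr0.ne']
          simp only [this]
          rw [Finset.sum_ite_mem, Finset.univ_inter, Finset.sum_const,
            nsmul_eq_mul]
        rw [lpNorm, hsum, Real.mul_rpow (by positivity) (Real.rpow_nonneg hδ r),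
          ← Real.rpow_mul hδ, mul_one_div_cancel hr0.ne', Real.rpow_one]
        calc ((ys.card : ℝ) ^ (1/r)) * δ ≤ M * δ :=
              mul_le_mul_of_nonneg_right (Finset.le_sup' (fun y => ((y.card : ℝ) ^ (1 / r))) hys) hδ
          _ = θ := by rw [hδdef]; field_simp
      have hinf : sInf (c '' ↑ys) = sInf (cbar k '' ↑ys) + δ := by
        rw [← Finset.inf'_eq_csInf_image ys hysne,
          ← Finset.inf'_eq_csInf_image ys hysne]
        apply le_antisymm
        · obtain ⟨j0, hj0, hj0v⟩ := Finset.exists_mem_eq_inf' hysne (cbar k)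
          calc ys.inf' hysne c ≤ c j0 := Finset.inf'_le _ hj0
            _ = cbar k j0 + δ := by simp [hcdef, hj0]
            _ = ys.inf' hysne (cbar k) + δ := by rw [hj0v]
        · apply Finset.le_inf'
          intro j hj
          have : c j = cbar k j + δ := by simp [hcdef, hj]
          rw [this]
          exact add_le_add_left (Finset.inf'_le _ hj) δ
      have hmem : T k + δ ∈ {t : ℝ | ∃ y ∈ F, ∃ c : Fin n → ℝ,
          lpNorm r (fun j => c j - cbar k j) ≤ θ ∧ t = sInf (c '' ↑y)} := by
        refine ⟨ys, hys, c, hnorm, ?_⟩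
        rw [hinf, hT, hysv]
      have := le_csSup hSbdd hmem
      have hSk : T k + δ ≤ S k := this
      rw [hδdef] at hSk
      linarith
    · have : S k ≤ T k + θ := csSup_le hSne hub
      linarith
  -- combine
  have hsub : vU - vSAA = (1 / N : ℝ) * ∑ k : Fin N, (S k - T k) := by
    rw [hvU, hvSAA, Finset.sum_sub_distrib, mul_sub]
  have hNpos : (0:ℝ) < N := Nat.cast_pos.mpr hN
  constructor
  · have h1 : (N : ℝ) * (θ / M) ≤ ∑ k : Fin N, (S k - T k) := by
      have := Finset.card_nsmul_le_sum Finset.univ (fun k => S k - T k) (θ / M)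
        (fun k _ => (key k).1)
      simpa [nsmul_eq_mul] using this
    rw [hsub]
    calc θ / M = (1 / N : ℝ) * ((N : ℝ) * (θ / M)) := by field_simp
      _ ≤ (1 / N : ℝ) * ∑ k : Fin N, (S k - T k) :=
        mul_le_mul_of_nonneg_left h1 (by positivity)
  · have h1 : ∑ k : Fin N, (S k - T k) ≤ (N : ℝ) * θ := by
      have := Finset.sum_le_card_nsmul Finset.univ (fun k => S k - T k) θ
        (fun k _ => (key k).2)
      simpa [nsmul_eq_mul] using this
    rw [hsub]
    calc (1 / N : ℝ) * ∑ k : Fin N, (S k - T k) ≤ (1 / N : ℝ) * ((N : ℝ) * θ) :=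
        mul_le_mul_of_nonneg_left h1 (by positivity)
      _ = θ := by field_simp
end

section
/- Let ℙ_∞ = { (1/N) Σ_{k∈[N]} δ(· − c^k) : ‖c^k − c̄^k‖_r ≤ θ for all k } be the ∞-Wasserstein ball around the empirical distribution of points c̄^1,...,c̄^N ∈ ℝ^n. For a nonempty finite X ⊆ 2^[n] with nonempty members, define v_D = min_{x∈X} sup_{ℙ∈ℙ_∞} E_ℙ[max_{j∈x} c̃_j] and v_D^{SAA} = min_{x∈X} (1/N) Σ_{k∈[N]} max_{j∈x} c̄^k_j. Then v_D = v_D^{SAA} + θ. -/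
lemma abs_le_lpNorm {n : ℕ} {r : ℝ} (hr : 1 ≤ r) (v : Fin n → ℝ) (j : Fin n) :
    |v j| ≤ lpNorm r v := by
  have hr0 : 0 < r := lt_of_lt_of_le one_pos hr
  have h1 : |v j| = (|v j| ^ r) ^ (1 / r) := by
    rw [← Real.rpow_mul (abs_nonneg _), mul_one_div, div_self hr0.ne', Real.rpow_one]
  rw [h1, lpNorm]
  apply Real.rpow_le_rpow (Real.rpow_nonneg (abs_nonneg _) _) _ (by positivity)
  exact Finset.single_le_sum (fun i _ => Real.rpow_nonneg (abs_nonneg _) _) (Finset.mem_univ j)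

/-- For DRBCP-D under the ∞-Wasserstein ball (each empirical point may be
perturbed within an ℓ_r-ball of radius θ), `v_D = v_D^{SAA} + θ`. -/
theorem drbcp_d_eq_saa_plus_radius (n N : ℕ) (hN : 0 < N)
    (X : Finset (Finset (Fin n))) (hX : X.Nonempty) (hne : ∀ x ∈ X, x.Nonempty)
    (cbar : Fin N → Fin n → ℝ) (θ r : ℝ) (hθ : 0 ≤ θ) (hr : 1 ≤ r)
    (vD vDSAA : ℝ)
    (hvD : vD = sInf {t : ℝ | ∃ x ∈ X, t =
      sSup {e : ℝ | ∃ c : Fin N → Fin n → ℝ,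
        (∀ k, lpNorm r (fun j => c k j - cbar k j) ≤ θ) ∧
        e = (1 / N : ℝ) * ∑ k : Fin N, sSup (c k '' ↑x)}})
    (hvDSAA : vDSAA = sInf {t : ℝ | ∃ x ∈ X, t =
      (1 / N : ℝ) * ∑ k : Fin N, sSup (cbar k '' ↑x)}) :
    vD = vDSAA + θ := by
  have hr0 : 0 < r := lt_of_lt_of_le one_pos hr
  have hNne : (N : ℝ) ≠ 0 := Nat.cast_ne_zero.mpr hN.ne'
  set G : Finset (Fin n) → ℝ := fun x => (1 / N : ℝ) * ∑ k : Fin N, sSup (cbar k '' ↑x)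
    with hG
  -- key: inner sup equals G x + θ
  have key : ∀ x ∈ X, sSup {e : ℝ | ∃ c : Fin N → Fin n → ℝ,
        (∀ k, lpNorm r (fun j => c k j - cbar k j) ≤ θ) ∧
        e = (1 / N : ℝ) * ∑ k : Fin N, sSup (c k '' ↑x)} = G x + θ := by
    intro x hx
    have hxne := hne x hx
    have hmax : ∀ k : Fin N, ∃ j ∈ x, ∀ i ∈ x, cbar k i ≤ cbar k j := fun k =>
      Finset.exists_max_image x (cbar k) hxne
    choose j0 hj0 hj0max using hmax
    have hGk : ∀ k, sSup (cbar k '' ↑x) = cbar k (j0 k) := by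
      intro k
      apply IsGreatest.csSup_eq
      exact ⟨⟨j0 k, hj0 k, rfl⟩, by rintro a ⟨i, hi, rfl⟩; exact hj0max k i hi⟩
    apply IsGreatest.csSup_eq
    constructor
    · -- attained by perturbing coordinate j0 k by θ
      refine ⟨fun k j => cbar k j + if j = j0 k then θ else 0, fun k => ?_, ?_⟩
      · have hsum : ∑ j : Fin n, |(cbar k j + if j = j0 k then θ else 0) - cbar k j| ^ r
            = θ ^ r := by
          have h : ∀ j : Fin n, |(cbar k j + if j = j0 k then θ else 0) - cbar k j| ^ r
              = if j = j0 k then θ ^ r else 0 := by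
            intro j
            by_cases h : j = j0 k <;> simp [h, abs_of_nonneg hθ, Real.zero_rpow hr0.ne']
          simp only [h, Finset.sum_ite_eq', Finset.mem_univ, if_true]
        rw [lpNorm]
        simp only
        rw [hsum, ← Real.rpow_mul hθ, mul_one_div, div_self hr0.ne', Real.rpow_one]
      · have himg : ∀ k : Fin N,
            sSup ((fun j => cbar k j + if j = j0 k then θ else 0) '' ↑x)
              = cbar k (j0 k) + θ := by
          intro k
          apply IsGreatest.csSup_eq
          constructor
          · exact ⟨j0 k, hj0 k, by simp⟩
          · rintro a ⟨i, hi, rfl⟩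
            by_cases h : i = j0 k
            · simp [h]
            · simp only [h, if_false, add_zero]
              exact le_add_of_le_of_nonneg (hj0max k i hi) hθ
          
        simp only [himg, Finset.sum_add_distrib, Finset.sum_const,
          Finset.card_univ, Fintype.card_fin, nsmul_eq_mul]
        rw [hG]
        simp only [← hGk]
        field_simp
    · -- upper bound
      rintro e ⟨c, hc, rfl⟩
      have hk : ∀ k : Fin N, sSup (c k '' ↑x) ≤ sSup (cbar k '' ↑x) + θ := by
        intro k
        apply csSup_le ((Set.Nonempty.image _ ⟨j0 k, hj0 k⟩))
        rintro a ⟨i, hi, rfl⟩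
        have h1 : c k i - cbar k i ≤ θ :=
          le_trans (le_trans (le_abs_self _) (abs_le_lpNorm hr (fun j => c k j - cbar k j) i))
            (hc k)
        have h2 : cbar k i ≤ sSup (cbar k '' ↑x) := by
          rw [hGk k]; exact hj0max k i hi
        linarith
      calc (1 / N : ℝ) * ∑ k : Fin N, sSup (c k '' ↑x)
          ≤ (1 / N : ℝ) * ∑ k : Fin N, (sSup (cbar k '' ↑x) + θ) := by
            apply mul_le_mul_of_nonneg_left (Finset.sum_le_sum fun k _ => hk k) (by positivity)
        _ = G x + θ := by
            rw [hG]
            simp only [Finset.sum_add_distrib, Finset.sum_const, Finset.card_univ,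
              Fintype.card_fin, nsmul_eq_mul]
            field_simp
  -- outer infimum
  have hset1 : {t : ℝ | ∃ x ∈ X, t =
      sSup {e : ℝ | ∃ c : Fin N → Fin n → ℝ,
        (∀ k, lpNorm r (fun j => c k j - cbar k j) ≤ θ) ∧
        e = (1 / N : ℝ) * ∑ k : Fin N, sSup (c k '' ↑x)}}
      = (fun x => G x + θ) '' ↑X := by
    ext t
    constructor
    · rintro ⟨x, hx, rfl⟩; exact ⟨x, hx, (key x hx).symm⟩
    · rintro ⟨x, hx, rfl⟩; exact ⟨x, hx, (key x hx).symm⟩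

  have hset2 : {t : ℝ | ∃ x ∈ X, t = G x} = G '' ↑X := by
    ext t
    constructor
    · rintro ⟨x, hx, rfl⟩; exact ⟨x, hx, rfl⟩
    · rintro ⟨x, hx, rfl⟩; exact ⟨x, hx, rfl⟩
  rw [hvD, hvDSAA, hset1]
  have h2 : sInf {t : ℝ | ∃ x ∈ X, t = (1 / N : ℝ) * ∑ k : Fin N, sSup (cbar k '' ↑x)}
      = sInf (G '' ↑X) := by rw [← hset2]
  rw [h2, ← Finset.inf'_eq_csInf_image X hX, ← Finset.inf'_eq_csInf_image X hX]
  obtain ⟨x1, hx1, he1⟩ := Finset.exists_mem_eq_inf' hX (fun x => G x + θ)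
  obtain ⟨x2, hx2, he2⟩ := Finset.exists_mem_eq_inf' hX G
  apply le_antisymm
  · calc X.inf' hX (fun x => G x + θ) ≤ G x2 + θ := Finset.inf'_le _ hx2
      _ = X.inf' hX G + θ := by rw [he2]
  · have h3 : X.inf' hX G ≤ G x1 := Finset.inf'_le G hx1
    rw [he1]
    linarith
end

section
/- Let X̄ be a nonempty clutter on [n] whose members all have cardinality at least Γ, and let F_Γ be the Γ-blocker of X̄: the unique family of inclusion-minimal subcollections y ⊆ binom([n],Γ) satisfying y ∩ binom(h,Γ) ≠ ∅ for every h ∈ X̄. Then for every cost vector c : [n] → ℝ, min_{h ∈ X̄} max_{s ⊆ h, |s| = Γ} Σ_{j∈s} c_j = max_{y ∈ F_Γ} min_{s ∈ y} Σ_{j∈s} c_j. -/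
/-- Γ-sum bottleneck duality via the Γ-blocker. For a nonempty clutter `X̄`
on `[n]` with all members of size ≥ Γ and its Γ-blocker `F_Γ` (inclusion-minimal families
of size-Γ subsets hitting `binom(h,Γ)` for every `h ∈ X̄`), for every `c : [n] → ℝ`,
`min_{h∈X̄} max_{s⊆h,|s|=Γ} Σ_{j∈s} c_j = max_{y∈F_Γ} min_{s∈y} Σ_{j∈s} c_j`. -/
theorem gamma_sum_blocker_duality (n Γ : ℕ) (hΓ : 1 ≤ Γ)
    (Xbar : Finset (Finset (Fin n))) (hXne : Xbar.Nonempty)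
    (hcard : ∀ h ∈ Xbar, Γ ≤ h.card)
    (hclutter : ∀ a ∈ Xbar, ∀ b ∈ Xbar, a ⊆ b → a = b)
    (FΓ : Finset (Finset (Finset (Fin n))))
    (hFΓ : ∀ y : Finset (Finset (Fin n)), y ∈ FΓ ↔
      (y ⊆ Finset.powersetCard Γ (Finset.univ : Finset (Fin n)) ∧
        (∀ h ∈ Xbar, (y ∩ Finset.powersetCard Γ h).Nonempty) ∧
        ∀ z ⊂ y, ¬ (∀ h ∈ Xbar, (z ∩ Finset.powersetCard Γ h).Nonempty)))
    (c : Fin n → ℝ) :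
    sInf {t : ℝ | ∃ h ∈ Xbar, t =
        sSup {u : ℝ | ∃ s ∈ Finset.powersetCard Γ h, u = ∑ j ∈ s, c j}} =
      sSup {t : ℝ | ∃ y ∈ FΓ, t = sInf {u : ℝ | ∃ s ∈ y, u = ∑ j ∈ s, c j}} := by
  classical
  set f : Finset (Fin n) → ℝ := fun s => ∑ j ∈ s, c j with hf
  -- finiteness of value sets of families
  have hfin : ∀ F : Finset (Finset (Fin n)),
      ({u : ℝ | ∃ s ∈ F, u = f s}).Finite := by
    intro F
    have : {u : ℝ | ∃ s ∈ F, u = f s} = f '' ↑F := by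
      ext u; constructor
      · rintro ⟨s, hs, rfl⟩; exact ⟨s, hs, rfl⟩
      · rintro ⟨s, hs, rfl⟩; exact ⟨s, hs, rfl⟩
    rw [this]
    exact (F.finite_toSet).image f
  set M : Finset (Fin n) → ℝ := fun h => sSup {u : ℝ | ∃ s ∈ Finset.powersetCard Γ h, u = f s}
    with hM
  set m : Finset (Finset (Fin n)) → ℝ := fun y => sInf {u : ℝ | ∃ s ∈ y, u = f s} with hm
  -- properties of M
  have hMmem : ∀ h ∈ Xbar, ∃ s ∈ Finset.powersetCard Γ h, M h = f s := by
    intro h hh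
    have hne : ({u : ℝ | ∃ s ∈ Finset.powersetCard Γ h, u = f s}).Nonempty := by
      obtain ⟨s, hs⟩ := Finset.powersetCard_nonempty.2 (hcard h hh)
      exact ⟨f s, s, hs, rfl⟩
    exact hne.csSup_mem (hfin _)
  have hMub : ∀ (h : Finset (Fin n)), ∀ s ∈ Finset.powersetCard Γ h, f s ≤ M h := by
    intro h s hs
    exact le_csSup (hfin _).bddAbove ⟨s, hs, rfl⟩
  -- properties of m
  have hmmem : ∀ y : Finset (Finset (Fin n)), y.Nonempty → ∃ s ∈ y, m y = f s := by
    intro y hy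
    obtain ⟨s, hs⟩ := hy
    have hne : ({u : ℝ | ∃ s ∈ y, u = f s}).Nonempty := ⟨f s, s, hs, rfl⟩
    exact hne.csInf_mem (hfin _)
  have hmlb : ∀ (y : Finset (Finset (Fin n))), ∀ s ∈ y, m y ≤ f s := by
    intro y s hs
    exact csInf_le (hfin _).bddBelow ⟨s, hs, rfl⟩
  -- the two value sets
  set S1 : Set ℝ := {t : ℝ | ∃ h ∈ Xbar, t = M h} with hS1
  set S2 : Set ℝ := {t : ℝ | ∃ y ∈ FΓ, t = m y} with hS2
  have hS1fin : S1.Finite := by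
    have : S1 = M '' ↑Xbar := by
      ext u; constructor
      · rintro ⟨h, hh, rfl⟩; exact ⟨h, hh, rfl⟩
      · rintro ⟨h, hh, rfl⟩; exact ⟨h, hh, rfl⟩
    rw [this]; exact (Xbar.finite_toSet).image M
  have hS2fin : S2.Finite := by
    have : S2 = m '' ↑FΓ := by
      ext u; constructor
      · rintro ⟨y, hy, rfl⟩; exact ⟨y, hy, rfl⟩
      · rintro ⟨y, hy, rfl⟩; exact ⟨y, hy, rfl⟩
    rw [this]; exact (FΓ.finite_toSet).image m
  have hS1ne : S1.Nonempty := by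
    obtain ⟨h, hh⟩ := hXne; exact ⟨M h, h, hh, rfl⟩
  set L : ℝ := sInf S1 with hL
  have hLle : ∀ h ∈ Xbar, L ≤ M h := fun h hh =>
    csInf_le hS1fin.bddBelow ⟨h, hh, rfl⟩
  -- construct a member of FΓ with value ≥ L
  set y₀ : Finset (Finset (Fin n)) :=
    (Finset.powersetCard Γ (Finset.univ : Finset (Fin n))).filter (fun s => L ≤ f s) with hy₀
  have hy₀hit : ∀ h ∈ Xbar, (y₀ ∩ Finset.powersetCard Γ h).Nonempty := by
    intro h hh
    obtain ⟨s, hs, hMs⟩ := hMmem h hh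
    refine ⟨s, Finset.mem_inter.2 ⟨Finset.mem_filter.2 ⟨?_, ?_⟩, hs⟩⟩
    · rw [Finset.mem_powersetCard] at hs ⊢
      exact ⟨Finset.subset_univ s, hs.2⟩
    · rw [← hMs]; exact hLle h hh
  -- take a minimal hitting subfamily of y₀
  set T : Finset (Finset (Finset (Fin n))) :=
    y₀.powerset.filter (fun z => ∀ h ∈ Xbar, (z ∩ Finset.powersetCard Γ h).Nonempty) with hT
  have hTne : T.Nonempty :=
    ⟨y₀, Finset.mem_filter.2 ⟨Finset.mem_powerset.2 le_rfl, hy₀hit⟩⟩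
  obtain ⟨y, hyT, hymin⟩ := T.exists_min_image (fun z => z.card) hTne
  rw [hT, Finset.mem_filter, Finset.mem_powerset] at hyT
  obtain ⟨hyy₀, hyhit⟩ := hyT
  have hyFΓ : y ∈ FΓ := by
    rw [hFΓ]
    refine ⟨?_, hyhit, ?_⟩
    · intro s hs
      exact (Finset.mem_filter.1 (hyy₀ hs)).1
    · intro z hz hzhit
      have hzT : z ∈ T := Finset.mem_filter.2
        ⟨Finset.mem_powerset.2 (hz.subset.trans hyy₀), hzhit⟩
      have := hymin z hzT
      exact absurd (Finset.card_lt_card hz) (not_lt.2 this)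
  have hyne : y.Nonempty := by
    obtain ⟨h, hh⟩ := hXne
    obtain ⟨s, hs⟩ := hyhit h hh
    exact ⟨s, (Finset.mem_inter.1 hs).1⟩
  have hLm : L ≤ m y := by
    obtain ⟨s, hs, hms⟩ := hmmem y hyne
    rw [hms]
    exact (Finset.mem_filter.1 (hyy₀ hs)).2
  have hS2ne : S2.Nonempty := ⟨m y, y, hyFΓ, rfl⟩
  -- prove equality by antisymmetry
  apply le_antisymm
  · -- L ≤ sSup S2
    exact hLm.trans (le_csSup hS2fin.bddAbove ⟨y, hyFΓ, rfl⟩)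
  · -- sSup S2 ≤ L
    apply csSup_le hS2ne
    rintro t ⟨y', hy', rfl⟩
    apply le_csInf hS1ne
    rintro t ⟨h, hh, rfl⟩
    obtain ⟨hy'sub, hy'hit, -⟩ := (hFΓ y').1 hy'
    obtain ⟨s, hs⟩ := hy'hit h hh
    rw [Finset.mem_inter] at hs
    exact (hmlb y' s hs.1).trans (hMub h s hs.2)
end

section
/- Fix Γ ≥ 1, θ ≥ 0, r ≥ 1, a nonempty finite set x ⊆ [n] with |x| ≥ Γ, and c ∈ ℝ^n. Then max{ max_{s ⊆ x, |s|=Γ} Σ_{j∈s} c'_j : ‖c' − c‖_r ≤ θ } = max_{s ⊆ x, |s|=Γ} Σ_{j∈s} c_j + Γ^{(r−1)/r} θ. -/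
section Aux

variable {α : Type*}

lemma aux_set_eq (T : Finset α) (F : α → ℝ) :
    {u : ℝ | ∃ s ∈ T, u = F s} = F '' ↑T := by
  ext u; simp [eq_comm]

lemma aux_finite (T : Finset α) (F : α → ℝ) :
    {u : ℝ | ∃ s ∈ T, u = F s}.Finite := by
  rw [aux_set_eq]; exact T.finite_toSet.image F

lemma aux_nonempty {T : Finset α} (hT : T.Nonempty) (F : α → ℝ) :
    {u : ℝ | ∃ s ∈ T, u = F s}.Nonempty := by
  obtain ⟨s, hs⟩ := hT; exact ⟨F s, s, hs, rfl⟩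

lemma aux_mem_sSup {T : Finset α} (hT : T.Nonempty) (F : α → ℝ) :
    ∃ s ∈ T, sSup {u : ℝ | ∃ s ∈ T, u = F s} = F s :=
  (aux_nonempty hT F).csSup_mem (aux_finite T F)

lemma aux_le_sSup {T : Finset α} (F : α → ℝ) {s : α} (hs : s ∈ T) :
    F s ≤ sSup {u : ℝ | ∃ s ∈ T, u = F s} :=
  le_csSup (aux_finite T F).bddAbove ⟨s, hs, rfl⟩

lemma aux_sSup_le {T : Finset α} (hT : T.Nonempty) (F : α → ℝ) {b : ℝ}
    (hb : ∀ s ∈ T, F s ≤ b) :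
    sSup {u : ℝ | ∃ s ∈ T, u = F s} ≤ b := by
  apply csSup_le (aux_nonempty hT F)
  rintro u ⟨s, hs, rfl⟩; exact hb s hs

end Aux

/-- Hölder-type bound: if `(∑ |β j|^r)^(1/r) ≤ θ` then for any set `s` of size `Γ`,
`∑_{j∈s} |β j| ≤ Γ^((r-1)/r) θ`. -/
lemma holder_bound {n Γ : ℕ} {θ r : ℝ} (hθ : 0 ≤ θ) (hr : 1 ≤ r)
    (β : Fin n → ℝ) (hnorm : (∑ j, |β j| ^ r) ^ (1 / r) ≤ θ)
    (s : Finset (Fin n)) (hs : s.card = Γ) :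
    ∑ j ∈ s, |β j| ≤ (Γ : ℝ) ^ ((r - 1) / r) * θ := by
  have hr0 : (0 : ℝ) < r := lt_of_lt_of_le one_pos hr
  have h1 : ∑ j ∈ s, |β j| ≤ (s.card : ℝ) ^ (1 - r⁻¹) * (∑ j ∈ s, |β j| ^ r) ^ r⁻¹ := by
    have := Real.inner_le_weight_mul_Lp_of_nonneg s hr (fun _ => (1 : ℝ))
      (fun j => |β j|) (fun _ => zero_le_one) (fun j => abs_nonneg _)
    simpa using this
  have hsum_nonneg : (0 : ℝ) ≤ ∑ j, |β j| ^ r :=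
    Finset.sum_nonneg fun j _ => Real.rpow_nonneg (abs_nonneg _) _
  have hsub : ∑ j ∈ s, |β j| ^ r ≤ ∑ j, |β j| ^ r :=
    Finset.sum_le_sum_of_subset_of_nonneg (Finset.subset_univ s)
      (fun j _ _ => Real.rpow_nonneg (abs_nonneg _) _)
  have hsub_nonneg : (0 : ℝ) ≤ ∑ j ∈ s, |β j| ^ r :=
    Finset.sum_nonneg fun j _ => Real.rpow_nonneg (abs_nonneg _) _
  have h2 : (∑ j ∈ s, |β j| ^ r) ^ r⁻¹ ≤ θ := by
    calc (∑ j ∈ s, |β j| ^ r) ^ r⁻¹ ≤ (∑ j, |β j| ^ r) ^ r⁻¹ :=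
          Real.rpow_le_rpow hsub_nonneg hsub (by positivity)
      _ ≤ θ := by rw [← one_div]; exact hnorm
  have h3 : ((s.card : ℝ)) ^ (1 - r⁻¹) * (∑ j ∈ s, |β j| ^ r) ^ r⁻¹ ≤
      (Γ : ℝ) ^ ((r - 1) / r) * θ := by
    rw [hs]
    have heq : (1 : ℝ) - r⁻¹ = (r - 1) / r := by field_simp
    rw [heq]
    exact mul_le_mul_of_nonneg_left h2 (Real.rpow_nonneg (Nat.cast_nonneg _) _)
  exact le_trans h1 h3

/-- `max { max_{s⊆x,|s|=Γ} Σ_{j∈s} c'_j : ‖c' − c‖_r ≤ θ }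
= max_{s⊆x,|s|=Γ} Σ_{j∈s} c_j + Γ^{(r−1)/r} θ`. -/
theorem gamma_sum_worst_case_over_ball (n Γ : ℕ) (hΓ : 1 ≤ Γ)
    (θ r : ℝ) (hθ : 0 ≤ θ) (hr : 1 ≤ r)
    (x : Finset (Fin n)) (hx : x.Nonempty) (hcard : Γ ≤ x.card) (c : Fin n → ℝ) :
    IsGreatest
      {t : ℝ | ∃ c' : Fin n → ℝ, lpNorm r (fun j => c' j - c j) ≤ θ ∧
        t = sSup {u : ℝ | ∃ s ∈ Finset.powersetCard Γ x, u = ∑ j ∈ s, c' j}}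
      (sSup {u : ℝ | ∃ s ∈ Finset.powersetCard Γ x, u = ∑ j ∈ s, c j} +
        (Γ : ℝ) ^ ((r - 1) / r) * θ) := by
  have hr0 : (0 : ℝ) < r := lt_of_lt_of_le one_pos hr
  have hΓpos : (0 : ℝ) < (Γ : ℝ) := by exact_mod_cast hΓ
  have hΓr : (0 : ℝ) < (Γ : ℝ) ^ (1 / r) := Real.rpow_pos_of_pos hΓpos _
  set δ : ℝ := θ / (Γ : ℝ) ^ (1 / r) with hδ_def
  have hδ : 0 ≤ δ := div_nonneg hθ hΓr.le
  have hT : (Finset.powersetCard Γ x).Nonempty := by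
    obtain ⟨s, hsx, hsc⟩ := Finset.exists_subset_card_eq hcard
    exact ⟨s, Finset.mem_powersetCard.2 ⟨hsx, hsc⟩⟩
  -- key arithmetic: Γ * δ = Γ^((r-1)/r) * θ
  have hkey : (Γ : ℝ) * δ = (Γ : ℝ) ^ ((r - 1) / r) * θ := by
    rw [hδ_def]
    rw [show (r - 1) / r = 1 - 1 / r by field_simp]
    rw [Real.rpow_sub hΓpos, Real.rpow_one]
    field_simp
  constructor
  · -- membership: construct the worst-case c'
    obtain ⟨s₀, hs₀, hsup₀⟩ := aux_mem_sSup hT (fun s => ∑ j ∈ s, c j)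
    obtain ⟨hs₀x, hs₀c⟩ := Finset.mem_powersetCard.1 hs₀
    refine ⟨fun j => c j + if j ∈ s₀ then δ else 0, ?_, ?_⟩
    · -- norm computation
      unfold lpNorm
      have habs : ∀ j, |c j + (if j ∈ s₀ then δ else 0) - c j| ^ r
          = if j ∈ s₀ then δ ^ r else 0 := by
        intro j
        by_cases h : j ∈ s₀ <;>
          simp [h, abs_of_nonneg hδ, Real.zero_rpow hr0.ne']
      rw [show (∑ j, |c j + (if j ∈ s₀ then δ else 0) - c j| ^ r)
          = ∑ j, if j ∈ s₀ then δ ^ r else 0 from Finset.sum_congr rfl fun j _ => habs j]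
      rw [Finset.sum_ite_mem, Finset.univ_inter, Finset.sum_const, hs₀c, nsmul_eq_mul]
      have : ((Γ : ℝ) * δ ^ r) ^ (1 / r) = θ := by
        rcases eq_or_lt_of_le hθ with h0 | hθpos
        · simp [hδ_def, ← h0, Real.zero_rpow hr0.ne',
            Real.zero_rpow (one_div_ne_zero hr0.ne'), Real.zero_rpow (inv_ne_zero hr0.ne')]
        · have hδpos : 0 < δ := div_pos hθpos hΓr
          rw [Real.mul_rpow hΓpos.le (Real.rpow_nonneg hδ _),
            ← Real.rpow_mul hδ]
          · rw [mul_one_div, div_self hr0.ne', Real.rpow_one, hδ_def,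
              mul_div_assoc']
            rw [mul_comm, mul_div_assoc, div_self hΓr.ne', mul_one]
      rw [this]
    · -- the sup over the perturbed c' equals sup + Γδ
      rw [← hkey]
      apply le_antisymm
      · -- sup + Γδ ≤ sup over c'
        have hmem : ∑ j ∈ s₀, (c j + if j ∈ s₀ then δ else 0)
            = ∑ j ∈ s₀, c j + (Γ : ℝ) * δ := by
          rw [Finset.sum_add_distrib]
          · congr 1
            rw [Finset.sum_congr rfl (fun j hj => by simp [hj] : ∀ j ∈ s₀,
              (if j ∈ s₀ then δ else (0:ℝ)) = δ), Finset.sum_const, hs₀c, nsmul_eq_mul]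
        calc sSup {u : ℝ | ∃ s ∈ Finset.powersetCard Γ x, u = ∑ j ∈ s, c j} + (Γ : ℝ) * δ
            = ∑ j ∈ s₀, (c j + if j ∈ s₀ then δ else 0) := by rw [hsup₀, hmem]
          _ ≤ _ := aux_le_sSup (fun s => ∑ j ∈ s, (c j + if j ∈ s₀ then δ else 0)) hs₀
      · apply aux_sSup_le hT
        intro s hs
        obtain ⟨hsx, hsc⟩ := Finset.mem_powersetCard.1 hs
        have h1 : ∑ j ∈ s, (if j ∈ s₀ then δ else (0:ℝ)) ≤ (Γ : ℝ) * δ := by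
          calc ∑ j ∈ s, (if j ∈ s₀ then δ else (0:ℝ)) ≤ ∑ j ∈ s, δ :=
                Finset.sum_le_sum fun j _ => by split <;> simp [hδ]
            _ = (Γ : ℝ) * δ := by rw [Finset.sum_const, hsc, nsmul_eq_mul]
        have h2 : ∑ j ∈ s, c j ≤
            sSup {u : ℝ | ∃ s ∈ Finset.powersetCard Γ x, u = ∑ j ∈ s, c j} :=
          aux_le_sSup (fun s => ∑ j ∈ s, c j) hs
        rw [Finset.sum_add_distrib]
        linarith
  · -- upper bound
    rintro t ⟨c', hnorm, rfl⟩
    apply aux_sSup_le hT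
    intro s hs
    obtain ⟨hsx, hsc⟩ := Finset.mem_powersetCard.1 hs
    have h1 : ∑ j ∈ s, c' j = ∑ j ∈ s, c j + ∑ j ∈ s, (c' j - c j) := by
      rw [← Finset.sum_add_distrib]; apply Finset.sum_congr rfl; intro j _; ring
    have h2 : ∑ j ∈ s, (c' j - c j) ≤ (Γ : ℝ) ^ ((r - 1) / r) * θ := by
      calc ∑ j ∈ s, (c' j - c j) ≤ ∑ j ∈ s, |c' j - c j| :=
            Finset.sum_le_sum fun j _ => le_abs_self _
        _ ≤ (Γ : ℝ) ^ ((r - 1) / r) * θ := holder_bound hθ hr _ hnorm s hsc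
    have h3 : ∑ j ∈ s, c j ≤
        sSup {u : ℝ | ∃ s ∈ Finset.powersetCard Γ x, u = ∑ j ∈ s, c j} :=
      aux_le_sSup (fun s => ∑ j ∈ s, c j) hs
    linarith
end

section
/- Let X be a nonempty finite collection of subsets of [n], each of size at least Γ, let c̄^1,...,c̄^N ∈ ℝ^n, θ ≥ 0, r ≥ 1. Define v_{DΓ} = min_{x∈X} (1/N) Σ_{k∈[N]} max{ max_{s⊆x,|s|=Γ} Σ_{j∈s} c_j : ‖c − c̄^k‖_r ≤ θ } and v^{SAA}_{DΓ} = min_{x∈X} (1/N) Σ_{k∈[N]} max_{s⊆x,|s|=Γ} Σ_{j∈s} c̄^k_j. Then v_{DΓ} = v^{SAA}_{DΓ} + Γ^{(r−1)/r} θ. -/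
lemma holder_aux {n : ℕ} {r : ℝ} (hr : 1 ≤ r) (s : Finset (Fin n)) (d : Fin n → ℝ) :
    ∑ j ∈ s, d j ≤ (s.card : ℝ) ^ ((r - 1) / r) * lpNorm r d := by
  have hr0 : 0 < r := lt_of_lt_of_le one_pos hr
  have h1 : ∑ j ∈ s, d j ≤ ∑ j ∈ s, |d j| := Finset.sum_le_sum fun j _ => le_abs_self _
  have key := Real.inner_le_weight_mul_Lp_of_nonneg Finset.univ hr
      (fun j => if j ∈ s then (1 : ℝ) else 0) (fun j => |d j|)
      (fun j => by positivity) (fun j => abs_nonneg _)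
  have e1 : ∑ j, (if j ∈ s then (1 : ℝ) else 0) * |d j| = ∑ j ∈ s, |d j| := by
    simp [ite_mul, Finset.sum_ite_mem]
  have e2 : ∑ j, (if j ∈ s then (1 : ℝ) else 0) = (s.card : ℝ) := by
    simp
  have e3 : ∑ j, (if j ∈ s then (1 : ℝ) else 0) * |d j| ^ r ≤ ∑ j, |d j| ^ r := by
    apply Finset.sum_le_sum
    intro j _
    by_cases h : j ∈ s <;> simp [h] <;> positivity
  rw [e1, e2] at key
  have e4 : (1 : ℝ) - r⁻¹ = (r - 1) / r := by
    field_simp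
  have e5 : (∑ j, (if j ∈ s then (1 : ℝ) else 0) * |d j| ^ r) ^ r⁻¹ ≤
      (∑ j, |d j| ^ r) ^ r⁻¹ := by
    apply Real.rpow_le_rpow _ e3 (by positivity)
    apply Finset.sum_nonneg
    intro j _
    by_cases h : j ∈ s <;> simp [h] <;> positivity
  calc ∑ j ∈ s, d j ≤ ∑ j ∈ s, |d j| := h1
    _ ≤ (s.card : ℝ) ^ ((1 : ℝ) - r⁻¹) *
        (∑ j, (if j ∈ s then (1 : ℝ) else 0) * |d j| ^ r) ^ r⁻¹ := key
    _ ≤ (s.card : ℝ) ^ ((1 : ℝ) - r⁻¹) * (∑ j, |d j| ^ r) ^ r⁻¹ := by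
        apply mul_le_mul_of_nonneg_left e5 (by positivity)
    _ = (s.card : ℝ) ^ ((r - 1) / r) * lpNorm r d := by
        rw [e4, lpNorm, one_div]

lemma achieve_aux {n : ℕ} {r θ : ℝ} (hr : 1 ≤ r) (hθ : 0 ≤ θ) (s : Finset (Fin n))
    (hs : 0 < s.card) :
    ∃ d : Fin n → ℝ, lpNorm r d ≤ θ ∧ ∑ j ∈ s, d j = (s.card : ℝ) ^ ((r - 1) / r) * θ := by
  have hr0 : 0 < r := lt_of_lt_of_le one_pos hr
  set m : ℝ := (s.card : ℝ) with hm_def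
  have hm : 0 < m := by rw [hm_def]; exact_mod_cast hs
  set a : ℝ := θ * m ^ (-(1 / r)) with ha_def
  have ha : 0 ≤ a := by positivity
  refine ⟨fun j => if j ∈ s then a else 0, ?_, ?_⟩
  · -- norm computation
    have e1 : ∀ j : Fin n, |if j ∈ s then a else 0| ^ r = if j ∈ s then a ^ r else 0 := by
      intro j
      by_cases h : j ∈ s <;> simp [h, abs_of_nonneg ha, Real.zero_rpow hr0.ne']
    have e2 : ∑ j, |if j ∈ s then a else 0| ^ r = m * a ^ r := by
      simp only [e1]
      rw [Finset.sum_ite_mem, Finset.univ_inter, Finset.sum_const, nsmul_eq_mul]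
    have e3 : a ^ r = θ ^ r * m⁻¹ := by
      rw [ha_def, Real.mul_rpow hθ (Real.rpow_nonneg hm.le _), ← Real.rpow_mul hm.le,
        show -(1 / r) * r = -1 by field_simp, Real.rpow_neg_one]
    have e4 : m * a ^ r = θ ^ r := by
      rw [e3]; field_simp
    rw [lpNorm]
    rw [e2, e4, one_div, Real.rpow_rpow_inv hθ hr0.ne']
  · -- sum computation
    have e5 : ∑ j ∈ s, (if j ∈ s then a else 0) = ∑ j ∈ s, a :=
      Finset.sum_congr rfl fun j hj => by simp [hj]
    rw [e5, Finset.sum_const, nsmul_eq_mul, ← hm_def, ha_def]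
    have : m * (θ * m ^ (-(1 / r))) = θ * (m ^ (1 : ℝ) * m ^ (-(1 / r))) := by
      rw [Real.rpow_one]; ring
    rw [this, ← Real.rpow_add hm]
    rw [show (1 : ℝ) + -(1 / r) = (r - 1) / r by field_simp; ring]
    ring

lemma inner_sup_eq {n Γ : ℕ} {r θ : ℝ} (hr : 1 ≤ r) (hθ : 0 ≤ θ) (hΓ : 1 ≤ Γ)
    (x : Finset (Fin n)) (hx : Γ ≤ x.card) (cb : Fin n → ℝ) :
    sSup {u : ℝ | ∃ c : Fin n → ℝ, lpNorm r (fun j => c j - cb j) ≤ θ ∧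
        u = sSup {w : ℝ | ∃ s ∈ Finset.powersetCard Γ x, w = ∑ j ∈ s, c j}} =
    sSup {w : ℝ | ∃ s ∈ Finset.powersetCard Γ x, w = ∑ j ∈ s, cb j} +
      (Γ : ℝ) ^ ((r - 1) / r) * θ := by
  set P := Finset.powersetCard Γ x with hP_def
  have hP : P.Nonempty := Finset.powersetCard_nonempty.2 hx
  set K : ℝ := (Γ : ℝ) ^ ((r - 1) / r) * θ with hK_def
  have hK : 0 ≤ K := by positivity
  have hW : ∀ c : Fin n → ℝ, sSup {w : ℝ | ∃ s ∈ P, w = ∑ j ∈ s, c j} =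
      P.sup' hP (fun s => ∑ j ∈ s, c j) := by
    intro c
    rw [Finset.sup'_eq_csSup_image]
    congr 1
    ext w
    constructor
    · rintro ⟨s, hs, rfl⟩; exact ⟨s, hs, rfl⟩
    · rintro ⟨s, hs, rfl⟩; exact ⟨s, hs, rfl⟩
  have hub : ∀ c : Fin n → ℝ, lpNorm r (fun j => c j - cb j) ≤ θ →
      P.sup' hP (fun s => ∑ j ∈ s, c j) ≤ P.sup' hP (fun s => ∑ j ∈ s, cb j) + K := by
    intro c hc
    apply Finset.sup'_le
    intro s hs
    have hcard : s.card = Γ := (Finset.mem_powersetCard.1 hs).2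
    have h1 : ∑ j ∈ s, c j = ∑ j ∈ s, cb j + ∑ j ∈ s, (c j - cb j) := by
      rw [← Finset.sum_add_distrib]
      apply Finset.sum_congr rfl
      intro j _
      ring
    have h2 : ∑ j ∈ s, (c j - cb j) ≤ K := by
      calc ∑ j ∈ s, (c j - cb j)
          ≤ (s.card : ℝ) ^ ((r - 1) / r) * lpNorm r (fun j => c j - cb j) :=
            holder_aux hr s _
        _ ≤ (Γ : ℝ) ^ ((r - 1) / r) * θ := by
            rw [hcard]
            apply mul_le_mul_of_nonneg_left hc (by positivity)
    rw [h1]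
    exact add_le_add (Finset.le_sup' (fun s => ∑ j ∈ s, cb j) hs) h2
  have hmem : (P.sup' hP (fun s => ∑ j ∈ s, cb j) + K) ∈
      {u : ℝ | ∃ c : Fin n → ℝ, lpNorm r (fun j => c j - cb j) ≤ θ ∧
        u = sSup {w : ℝ | ∃ s ∈ P, w = ∑ j ∈ s, c j}} := by
    obtain ⟨s₀, hs₀, hs₀eq⟩ := Finset.exists_mem_eq_sup' hP (fun s => ∑ j ∈ s, cb j)
    have hcard₀ : s₀.card = Γ := (Finset.mem_powersetCard.1 hs₀).2
    have hs₀pos : 0 < s₀.card := by omega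
    obtain ⟨d, hd1, hd2⟩ := achieve_aux hr hθ s₀ hs₀pos
    refine ⟨fun j => cb j + d j, ?_, ?_⟩
    · have : (fun j => cb j + d j - cb j) = d := by funext j; ring
      rw [this]; exact hd1
    · rw [hW]
      apply le_antisymm
      · have h1 : P.sup' hP (fun s => ∑ j ∈ s, cb j) + K =
            ∑ j ∈ s₀, (cb j + d j) := by
          rw [Finset.sum_add_distrib, hd2, hcard₀, hs₀eq]
        exact h1.le.trans (Finset.le_sup' (fun s => ∑ j ∈ s, (cb j + d j)) hs₀)
      · exact hub _ (by
          have : (fun j => cb j + d j - cb j) = d := by funext j; ring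
          rw [this]; exact hd1)
  have hubU : ∀ u ∈ {u : ℝ | ∃ c : Fin n → ℝ, lpNorm r (fun j => c j - cb j) ≤ θ ∧
      u = sSup {w : ℝ | ∃ s ∈ P, w = ∑ j ∈ s, c j}},
      u ≤ P.sup' hP (fun s => ∑ j ∈ s, cb j) + K := by
    rintro u ⟨c, hc, rfl⟩
    rw [hW]
    exact hub c hc
  rw [hW cb]
  exact le_antisymm (csSup_le ⟨_, hmem⟩ hubU) (le_csSup ⟨_, hubU⟩ hmem)

/-- For DRΓBCP-D under the ∞-Wasserstein worst case (each empirical point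
perturbed within an ℓ_r-ball of radius θ), `v_{DΓ} = v^{SAA}_{DΓ} + Γ^{(r−1)/r} θ`. -/
theorem drgbcp_d_eq_saa_plus_radius (n N Γ : ℕ) (hN : 0 < N) (hΓ : 1 ≤ Γ)
    (X : Finset (Finset (Fin n))) (hX : X.Nonempty) (hcard : ∀ x ∈ X, Γ ≤ x.card)
    (cbar : Fin N → Fin n → ℝ) (θ r : ℝ) (hθ : 0 ≤ θ) (hr : 1 ≤ r)
    (vDΓ vSAA : ℝ)
    (hvDΓ : vDΓ = sInf {t : ℝ | ∃ x ∈ X, t = (1 / N : ℝ) * ∑ k : Fin N,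
      sSup {u : ℝ | ∃ c : Fin n → ℝ, lpNorm r (fun j => c j - cbar k j) ≤ θ ∧
        u = sSup {w : ℝ | ∃ s ∈ Finset.powersetCard Γ x, w = ∑ j ∈ s, c j}}})
    (hvSAA : vSAA = sInf {t : ℝ | ∃ x ∈ X, t = (1 / N : ℝ) * ∑ k : Fin N,
      sSup {w : ℝ | ∃ s ∈ Finset.powersetCard Γ x, w = ∑ j ∈ s, cbar k j}}) :
    vDΓ = vSAA + (Γ : ℝ) ^ ((r - 1) / r) * θ := by
  set K : ℝ := (Γ : ℝ) ^ ((r - 1) / r) * θ with hK_def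
  set G : Finset (Fin n) → ℝ := fun x => (1 / N : ℝ) * ∑ k : Fin N,
      sSup {w : ℝ | ∃ s ∈ Finset.powersetCard Γ x, w = ∑ j ∈ s, cbar k j} with hG_def
  have key : ∀ x ∈ X, (1 / N : ℝ) * ∑ k : Fin N,
      sSup {u : ℝ | ∃ c : Fin n → ℝ, lpNorm r (fun j => c j - cbar k j) ≤ θ ∧
        u = sSup {w : ℝ | ∃ s ∈ Finset.powersetCard Γ x, w = ∑ j ∈ s, c j}} = G x + K := by
    intro x hx
    have h1 : ∀ k : Fin N,
        sSup {u : ℝ | ∃ c : Fin n → ℝ, lpNorm r (fun j => c j - cbar k j) ≤ θ ∧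
          u = sSup {w : ℝ | ∃ s ∈ Finset.powersetCard Γ x, w = ∑ j ∈ s, c j}} =
        sSup {w : ℝ | ∃ s ∈ Finset.powersetCard Γ x, w = ∑ j ∈ s, cbar k j} + K := by
      intro k
      exact inner_sup_eq hr hθ hΓ x (hcard x hx) (cbar k)
    rw [Finset.sum_congr rfl (fun k _ => h1 k), Finset.sum_add_distrib,
      Finset.sum_const, Finset.card_univ, Fintype.card_fin, nsmul_eq_mul, mul_add, hG_def]
    have hN' : (N : ℝ) ≠ 0 := Nat.cast_ne_zero.2 hN.ne'
    field_simp
  have hset : {t : ℝ | ∃ x ∈ X, t = (1 / N : ℝ) * ∑ k : Fin N,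
      sSup {u : ℝ | ∃ c : Fin n → ℝ, lpNorm r (fun j => c j - cbar k j) ≤ θ ∧
        u = sSup {w : ℝ | ∃ s ∈ Finset.powersetCard Γ x, w = ∑ j ∈ s, c j}}} =
      {t : ℝ | ∃ x ∈ X, t = G x + K} := by
    ext t
    simp only [Set.mem_setOf_eq]
    constructor
    · rintro ⟨x, hx, rfl⟩; exact ⟨x, hx, key x hx⟩
    · rintro ⟨x, hx, rfl⟩; exact ⟨x, hx, (key x hx).symm⟩
  have hinf : ∀ H : Finset (Fin n) → ℝ,
      sInf {t : ℝ | ∃ x ∈ X, t = H x} = X.inf' hX H := by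
    intro H
    rw [Finset.inf'_eq_csInf_image]
    congr 1
    ext t
    constructor
    · rintro ⟨x, hx, rfl⟩; exact ⟨x, hx, rfl⟩
    · rintro ⟨x, hx, rfl⟩; exact ⟨x, hx, rfl⟩
  have hGset : vSAA = X.inf' hX G := by rw [hvSAA]; exact hinf G
  have hDset : vDΓ = X.inf' hX (fun x => G x + K) := by
    rw [hvDΓ, hset]; exact hinf _
  rw [hGset, hDset]
  apply le_antisymm
  · obtain ⟨x₀, hx₀, hx₀eq⟩ := Finset.exists_mem_eq_inf' hX G
    calc X.inf' hX (fun x => G x + K) ≤ G x₀ + K := Finset.inf'_le _ hx₀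
      _ = X.inf' hX G + K := by rw [hx₀eq]
  · apply Finset.le_inf'
    intro x hx
    exact add_le_add (Finset.inf'_le _ hx) (le_refl K)
end

section
/- Let F_Γ be a nonempty finite family of nonempty collections of size-Γ subsets of [n], c̄^1,...,c̄^N ∈ ℝ^n, θ ≥ 0, r ≥ 1. Define v_{UΓ} = (1/N) Σ_k max_{y∈F_Γ} max{ min_{s∈y} Σ_{j∈s}(c̄^k_j + β_j) : Σ_{j ∈ ∪_{s∈y} s} β_j^r ≤ θ^r, β_j ≥ 0 } and v^{SAA}_{UΓ} = (1/N) Σ_k max_{y∈F_Γ} min_{s∈y} Σ_{j∈s} c̄^k_j. Then v^{SAA}_{UΓ} + Γθ / max_{y∈F_Γ} |∪_{s∈y} s|^{1/r} ≤ v_{UΓ} ≤ v^{SAA}_{UΓ} + Γ^{(r−1)/r} θ. -/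
open Finset

private lemma set_eq_image' {α : Type*} (y : Finset α) (f : α → ℝ) :
    {u : ℝ | ∃ s ∈ y, u = f s} = f '' ↑y := by
  ext u
  simp [Set.mem_image, eq_comm]

private lemma sInf_eq_inf'' {α : Type*} (y : Finset α) (hy : y.Nonempty) (f : α → ℝ) :
    sInf {u : ℝ | ∃ s ∈ y, u = f s} = y.inf' hy f := by
  rw [set_eq_image', Finset.inf'_eq_csInf_image]

private lemma inf'_add_const' {α : Type*} (y : Finset α) (hy : y.Nonempty) (f : α → ℝ) (c : ℝ) :
    y.inf' hy (fun s => f s + c) = y.inf' hy f + c := by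
  apply le_antisymm
  · obtain ⟨a, ha, hae⟩ := Finset.exists_mem_eq_inf' hy f
    calc y.inf' hy (fun s => f s + c) ≤ f a + c := Finset.inf'_le _ ha
      _ = y.inf' hy f + c := by rw [hae]
  · apply Finset.le_inf'
    intro b hb
    have := Finset.inf'_le f hb
    linarith

private lemma holder_key {ι : Type*} (s0 : Finset ι) (β : ι → ℝ)
    (hβ : ∀ j ∈ s0, 0 ≤ β j) (Γ : ℕ) (hΓ : 1 ≤ Γ) (hcard : s0.card = Γ)
    (θ r : ℝ) (hθ : 0 ≤ θ) (hr : 1 ≤ r)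
    (hQ : ∑ j ∈ s0, β j ^ r ≤ θ ^ r) :
    ∑ j ∈ s0, β j ≤ (Γ : ℝ) ^ ((r - 1) / r) * θ := by
  have hr0 : (0 : ℝ) < r := by linarith
  have hc : (0 : ℝ) < (Γ : ℝ) := by exact_mod_cast Nat.lt_of_lt_of_le Nat.zero_lt_one hΓ
  set c : ℝ := (Γ : ℝ) with hcdef
  set S : ℝ := ∑ j ∈ s0, β j with hSdef
  have hS0 : 0 ≤ S := Finset.sum_nonneg hβ
  have key := Real.rpow_arith_mean_le_arith_mean_rpow s0 (fun _ => 1 / c) β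
    (fun i _ => by positivity)
    (by rw [Finset.sum_const, hcard, nsmul_eq_mul]; field_simp; exact hcdef.symm) hβ hr
  have h2 : ((1 / c) * S) ^ r ≤ (1 / c) * θ ^ r := by
    have e1 : ∑ i ∈ s0, (1 / c) * β i = (1 / c) * S := by rw [← Finset.mul_sum]
    have e2 : ∑ i ∈ s0, (1 / c) * β i ^ r = (1 / c) * ∑ i ∈ s0, β i ^ r := by
      rw [← Finset.mul_sum]
    rw [e1, e2] at key
    have : (1 / c) * ∑ i ∈ s0, β i ^ r ≤ (1 / c) * θ ^ r :=
      mul_le_mul_of_nonneg_left hQ (by positivity)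
    linarith
  have h3 : (1 / c) * S ≤ ((1 / c) * θ ^ r) ^ (1 / r) := by
    have e1 : (1 / c) * S = (((1 / c) * S) ^ r) ^ (1 / r) := by
      rw [← Real.rpow_mul (by positivity), mul_one_div_cancel hr0.ne', Real.rpow_one]
    rw [e1]
    exact Real.rpow_le_rpow (by positivity) h2 (by positivity)
  have e2 : ((1 / c) * θ ^ r) ^ (1 / r) = (1 / c) ^ (1 / r) * θ := by
    rw [Real.mul_rpow (by positivity) (by positivity), ← Real.rpow_mul hθ,
      mul_one_div_cancel hr0.ne', Real.rpow_one]
  have e3 : (1 / c) ^ (1 / r) = c ^ (-(1 / r)) := by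
    rw [one_div, Real.inv_rpow hc.le, Real.rpow_neg hc.le]
  have e4 : c * c ^ (-(1 / r)) = c ^ ((r - 1) / r) := by
    have h : (r - 1) / r = 1 + (-(1 / r)) := by
      field_simp
      ring
    rw [h, Real.rpow_add hc, Real.rpow_one]
  have h4 : S ≤ c * ((1 / c) ^ (1 / r) * θ) := by
    have h5 : S = c * ((1 / c) * S) := by field_simp
    rw [h5]
    exact mul_le_mul_of_nonneg_left (h3.trans_eq e2) hc.le
  calc S ≤ c * ((1 / c) ^ (1 / r) * θ) := h4
    _ = (c * c ^ (-(1 / r))) * θ := by rw [e3]; ring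
    _ = c ^ ((r - 1) / r) * θ := by rw [e4]

/-- Bounds for DRΓBCP-U:
`v^{SAA}_{UΓ} + Γθ / max_{y∈F_Γ} |∪_{s∈y} s|^{1/r} ≤ v_{UΓ} ≤ v^{SAA}_{UΓ} + Γ^{(r−1)/r} θ`. -/
theorem drgbcp_u_saa_bounds (n N Γ : ℕ) (hN : 0 < N) (hΓ : 1 ≤ Γ)
    (FΓ : Finset (Finset (Finset (Fin n)))) (hF : FΓ.Nonempty)
    (hyne : ∀ y ∈ FΓ, y.Nonempty)
    (hysub : ∀ y ∈ FΓ, ∀ s ∈ y, s.card = Γ)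
    (cbar : Fin N → Fin n → ℝ) (θ r : ℝ) (hθ : 0 ≤ θ) (hr : 1 ≤ r)
    (vUΓ vSAA : ℝ)
    (hvUΓ : vUΓ = (1 / N : ℝ) * ∑ k : Fin N,
      sSup {t : ℝ | ∃ y ∈ FΓ, ∃ β : Fin n → ℝ,
        (∀ j ∈ y.biUnion id, 0 ≤ β j) ∧
        (∑ j ∈ y.biUnion id, β j ^ r) ≤ θ ^ r ∧
        t = sInf {u : ℝ | ∃ s ∈ y, u = ∑ j ∈ s, (cbar k j + β j)}})
    (hvSAA : vSAA = (1 / N : ℝ) * ∑ k : Fin N,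
      sSup {t : ℝ | ∃ y ∈ FΓ, t = sInf {u : ℝ | ∃ s ∈ y, u = ∑ j ∈ s, cbar k j}}) :
    vSAA + (Γ : ℝ) * θ /
        (FΓ.sup' hF fun y => (((y.biUnion id).card : ℝ) ^ (1 / r))) ≤ vUΓ ∧
      vUΓ ≤ vSAA + (Γ : ℝ) ^ ((r - 1) / r) * θ := by
  have hr0 : (0 : ℝ) < r := by linarith
  have hΓR : (0 : ℝ) < (Γ : ℝ) := by exact_mod_cast Nat.lt_of_lt_of_le Nat.zero_lt_one hΓ
  set M : ℝ := FΓ.sup' hF fun y => (((y.biUnion id).card : ℝ) ^ (1 / r)) with hMdef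
  -- the per-sample SAA value
  set G : Fin N → ℝ := fun k =>
    FΓ.sup' hF (fun y => sInf {u : ℝ | ∃ s ∈ y, u = ∑ j ∈ s, cbar k j}) with hGdef
  -- the per-sample robust feasible set
  set Sk : Fin N → Set ℝ := fun k =>
    {t : ℝ | ∃ y ∈ FΓ, ∃ β : Fin n → ℝ,
        (∀ j ∈ y.biUnion id, 0 ≤ β j) ∧
        (∑ j ∈ y.biUnion id, β j ^ r) ≤ θ ^ r ∧
        t = sInf {u : ℝ | ∃ s ∈ y, u = ∑ j ∈ s, (cbar k j + β j)}} with hSkdef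
  -- vSAA in terms of G
  have hvSAA' : vSAA = (1 / N : ℝ) * ∑ k : Fin N, G k := by
    rw [hvSAA]
    congr 1
    apply Finset.sum_congr rfl
    intro k _
    simp only [hGdef]
    rw [set_eq_image' FΓ (fun y => sInf {u : ℝ | ∃ s ∈ y, u = ∑ j ∈ s, cbar k j}),
      Finset.sup'_eq_csSup_image]
  -- positivity of card of biUnion for members of FΓ
  have hcardpos : ∀ y ∈ FΓ, 0 < ((y.biUnion id).card : ℝ) := by
    intro y hy
    obtain ⟨s1, hs1⟩ := hyne y hy
    have hs1c : s1.card = Γ := hysub y hy s1 hs1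
    have : s1.Nonempty := Finset.card_pos.mp (by omega)
    obtain ⟨j, hj⟩ := this
    have : j ∈ y.biUnion id := Finset.mem_biUnion.2 ⟨s1, hs1, hj⟩
    exact_mod_cast Finset.card_pos.mpr ⟨j, this⟩
  have hMpos : 0 < M := by
    obtain ⟨y0, hy0⟩ := hF
    have h1 : (0 : ℝ) < ((y0.biUnion id).card : ℝ) ^ (1 / r) :=
      Real.rpow_pos_of_pos (hcardpos y0 hy0) _
    rw [hMdef]
    exact h1.trans_le
      (Finset.le_sup' (fun y => (((y.biUnion id).card : ℝ) ^ (1 / r))) hy0)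
  -- upper bound for elements of Sk
  have hub : ∀ k : Fin N, ∀ t ∈ Sk k, t ≤ G k + (Γ : ℝ) ^ ((r - 1) / r) * θ := by
    rintro k t ⟨y, hy, β, hβ0, hβr, rfl⟩
    have hyn : y.Nonempty := hyne y hy
    rw [sInf_eq_inf'' y hyn]
    obtain ⟨s0, hs0, hs0eq⟩ := Finset.exists_mem_eq_inf' hyn (fun s => ∑ j ∈ s, cbar k j)
    have hsub : s0 ⊆ y.biUnion id := fun j hj => Finset.mem_biUnion.2 ⟨s0, hs0, hj⟩
    have hβ0' : ∀ j ∈ s0, 0 ≤ β j := fun j hj => hβ0 j (hsub hj)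
    have hQ : ∑ j ∈ s0, β j ^ r ≤ θ ^ r := by
      refine le_trans (Finset.sum_le_sum_of_subset_of_nonneg hsub ?_) hβr
      intro j hj _
      exact Real.rpow_nonneg (hβ0 j hj) r
    have hS := holder_key s0 β hβ0' Γ hΓ (hysub y hy s0 hs0) θ r hθ hr hQ
    have h1 : y.inf' hyn (fun s => ∑ j ∈ s, (cbar k j + β j))
        ≤ ∑ j ∈ s0, cbar k j + ∑ j ∈ s0, β j := by
      have := Finset.inf'_le (fun s => ∑ j ∈ s, (cbar k j + β j)) hs0
      simpa only [Finset.sum_add_distrib] using this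
    have h2 : ∑ j ∈ s0, cbar k j ≤ G k := by
      have h3 : sInf {u : ℝ | ∃ s ∈ y, u = ∑ j ∈ s, cbar k j} ≤ G k :=
        Finset.le_sup' (fun y => sInf {u : ℝ | ∃ s ∈ y, u = ∑ j ∈ s, cbar k j}) hy
      rw [sInf_eq_inf'' y hyn, hs0eq] at h3
      exact h3
    linarith
  have hbdd : ∀ k : Fin N, BddAbove (Sk k) := fun k => ⟨_, hub k⟩
  -- upper bound on sSup
  have hU : ∀ k : Fin N, sSup (Sk k) ≤ G k + (Γ : ℝ) ^ ((r - 1) / r) * θ := by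
    intro k
    apply csSup_le
    · -- nonempty: take any y and β = 0
      obtain ⟨y0, hy0⟩ := hF
      refine ⟨_, y0, hy0, fun _ => 0, fun j _ => le_refl 0, ?_, rfl⟩
      have : ∀ j ∈ y0.biUnion id, (0 : ℝ) ^ r = 0 := fun j _ => Real.zero_rpow hr0.ne'
      rw [Finset.sum_congr rfl this, Finset.sum_const, smul_zero]
      exact Real.rpow_nonneg hθ r
    · exact hub k
  -- lower bound on sSup
  have hL : ∀ k : Fin N, G k + (Γ : ℝ) * θ / M ≤ sSup (Sk k) := by
    intro k
    obtain ⟨ys, hys, hyseq⟩ := Finset.exists_mem_eq_sup' hF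
      (fun y => sInf {u : ℝ | ∃ s ∈ y, u = ∑ j ∈ s, cbar k j})
    have hysn : ys.Nonempty := hyne ys hys
    set m : ℝ := ((ys.biUnion id).card : ℝ) with hmdef
    have hm : 0 < m := hcardpos ys hys
    have hm1r : 0 < m ^ (1 / r) := Real.rpow_pos_of_pos hm _
    set β : Fin n → ℝ := fun _ => θ / m ^ (1 / r) with hβdef
    have hβnn : ∀ j ∈ ys.biUnion id, 0 ≤ β j := fun j _ => div_nonneg hθ hm1r.le
    have hpow : (θ / m ^ (1 / r)) ^ r = θ ^ r / m := by
      rw [Real.div_rpow hθ hm1r.le, ← Real.rpow_mul hm.le, one_div_mul_cancel hr0.ne',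
        Real.rpow_one]
    have hcon : ∑ j ∈ ys.biUnion id, β j ^ r ≤ θ ^ r := by
      have : ∑ j ∈ ys.biUnion id, β j ^ r = m * (θ ^ r / m) := by
        simp only [hβdef]
        rw [Finset.sum_const, nsmul_eq_mul, hpow, ← hmdef]
      rw [this, mul_div_cancel₀ _ hm.ne']
    have hmem : sInf {u : ℝ | ∃ s ∈ ys, u = ∑ j ∈ s, (cbar k j + β j)} ∈ Sk k :=
      ⟨ys, hys, β, hβnn, hcon, rfl⟩
    have hval : sInf {u : ℝ | ∃ s ∈ ys, u = ∑ j ∈ s, (cbar k j + β j)}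
        = G k + (Γ : ℝ) * (θ / m ^ (1 / r)) := by
      rw [sInf_eq_inf'' ys hysn]
      have hcong : ∀ s ∈ ys, ∑ j ∈ s, (cbar k j + β j)
          = (∑ j ∈ s, cbar k j) + (Γ : ℝ) * (θ / m ^ (1 / r)) := by
        intro s hs
        rw [Finset.sum_add_distrib, Finset.sum_const, hysub ys hys s hs, nsmul_eq_mul]
      rw [Finset.inf'_congr hysn rfl hcong,
        inf'_add_const' ys hysn (fun s => ∑ j ∈ s, cbar k j) ((Γ : ℝ) * (θ / m ^ (1 / r))),
        ← sInf_eq_inf'' ys hysn, ← hyseq]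
    have hdiv : (Γ : ℝ) * θ / M ≤ (Γ : ℝ) * (θ / m ^ (1 / r)) := by
      rw [← mul_div_assoc]
      have hmM : m ^ (1 / r) ≤ M := by
        rw [hMdef, hmdef]
        exact Finset.le_sup' (fun y => (((y.biUnion id).card : ℝ) ^ (1 / r))) hys
      gcongr
    calc G k + (Γ : ℝ) * θ / M ≤ G k + (Γ : ℝ) * (θ / m ^ (1 / r)) := by linarith
      _ = sInf {u : ℝ | ∃ s ∈ ys, u = ∑ j ∈ s, (cbar k j + β j)} := hval.symm
      _ ≤ sSup (Sk k) := le_csSup (hbdd k) hmem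
  -- combine
  have hNpos : (0 : ℝ) < (N : ℝ) := by exact_mod_cast hN
  have hNinv : (0 : ℝ) ≤ 1 / (N : ℝ) := by positivity
  constructor
  · rw [hvUΓ, hvSAA']
    have hsum : ∑ k : Fin N, (G k + (Γ : ℝ) * θ / M) ≤ ∑ k : Fin N, sSup (Sk k) :=
      Finset.sum_le_sum fun k _ => hL k
    have e : ∑ k : Fin N, (G k + (Γ : ℝ) * θ / M)
        = (∑ k : Fin N, G k) + (N : ℝ) * ((Γ : ℝ) * θ / M) := by
      rw [Finset.sum_add_distrib, Finset.sum_const, Finset.card_univ, Fintype.card_fin,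
        nsmul_eq_mul]
    have := mul_le_mul_of_nonneg_left hsum hNinv
    rw [e] at this
    calc (1 / N : ℝ) * ∑ k : Fin N, G k + (Γ : ℝ) * θ / M
        = (1 / N : ℝ) * ((∑ k : Fin N, G k) + (N : ℝ) * ((Γ : ℝ) * θ / M)) := by
          field_simp
      _ ≤ (1 / N : ℝ) * ∑ k : Fin N, sSup (Sk k) := this
  · rw [hvUΓ, hvSAA']
    have hsum : ∑ k : Fin N, sSup (Sk k)
        ≤ ∑ k : Fin N, (G k + (Γ : ℝ) ^ ((r - 1) / r) * θ) :=
      Finset.sum_le_sum fun k _ => hU k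
    have e : ∑ k : Fin N, (G k + (Γ : ℝ) ^ ((r - 1) / r) * θ)
        = (∑ k : Fin N, G k) + (N : ℝ) * ((Γ : ℝ) ^ ((r - 1) / r) * θ) := by
      rw [Finset.sum_add_distrib, Finset.sum_const, Finset.card_univ, Fintype.card_fin,
        nsmul_eq_mul]
    have := mul_le_mul_of_nonneg_left hsum hNinv
    rw [e] at this
    calc (1 / N : ℝ) * ∑ k : Fin N, sSup (Sk k)
        ≤ (1 / N : ℝ) * ((∑ k : Fin N, G k) + (N : ℝ) * ((Γ : ℝ) ^ ((r - 1) / r) * θ)) := this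
      _ = (1 / N : ℝ) * ∑ k : Fin N, G k + (Γ : ℝ) ^ ((r - 1) / r) * θ := by
          field_simp
end

section
/- Fix a nonempty finite set y ⊆ [n], c̄ ∈ ℝ^n sorted on y as c̄_{y_1} ≤ ... ≤ c̄_{y_{|y|}}, and θ ≥ 0 with r = 1. Let t* = max{ t : Σ_{j∈y, t ≥ c̄_j} (t − c̄_j) ≤ θ }. Then there exists a unique index m ∈ {1,...,|y|} such that c̄_{y_m} ≤ (Σ_{i=1}^m c̄_{y_i} + θ)/m < c̄_{y_{m+1}} (with c̄_{y_{|y|+1}} := +∞), and t* = (Σ_{i=1}^m c̄_{y_i} + θ)/m. -/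
/-- Closed-form L1 solution of the robust bottleneck inner problem.
With `e` enumerating `y` in nondecreasing order of `c̄` and
`t* = max { t : Σ_{j∈y, t ≥ c̄_j} (t − c̄_j) ≤ θ }`, there is a unique
`m ∈ {1,…,|y|}` with `c̄_{y_m} ≤ (Σ_{i=1}^m c̄_{y_i} + θ)/m < c̄_{y_{m+1}}`
(last condition void when `m = |y|`), and `t*` equals that quotient. -/
theorem robust_bottleneck_l1_closed_form (n : ℕ) (y : Finset (Fin n))
    (hy : y.Nonempty) (cbar : Fin n → ℝ) (θ : ℝ) (hθ : 0 ≤ θ)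
    (e : ℕ → Fin n)
    (hmem : ∀ i, i < y.card → e i ∈ y)
    (hinj : ∀ i j, i < y.card → j < y.card → e i = e j → i = j)
    (hmono : ∀ i j, i ≤ j → j < y.card → cbar (e i) ≤ cbar (e j))
    (tstar : ℝ)
    (ht : IsGreatest
      {t : ℝ | ∑ j ∈ y.filter (fun j => cbar j ≤ t), (t - cbar j) ≤ θ} tstar) :
    (∃! m : ℕ, 1 ≤ m ∧ m ≤ y.card ∧
      cbar (e (m - 1)) ≤ ((∑ i ∈ Finset.range m, cbar (e i)) + θ) / m ∧
      (m = y.card ∨ ((∑ i ∈ Finset.range m, cbar (e i)) + θ) / m < cbar (e m))) ∧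
    ∀ m : ℕ, (1 ≤ m ∧ m ≤ y.card ∧
      cbar (e (m - 1)) ≤ ((∑ i ∈ Finset.range m, cbar (e i)) + θ) / m ∧
      (m = y.card ∨ ((∑ i ∈ Finset.range m, cbar (e i)) + θ) / m < cbar (e m))) →
      tstar = ((∑ i ∈ Finset.range m, cbar (e i)) + θ) / m := by
  classical
  set N := y.card with hNdef
  have hN : 1 ≤ N := Finset.card_pos.mpr hy
  set T : ℕ → ℝ := fun m => ((∑ i ∈ Finset.range m, cbar (e i)) + θ) / m with hT
  have himage : (Finset.range N).image e = y := by
    apply Finset.eq_of_subset_of_card_le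
    · intro j hj
      rcases Finset.mem_image.mp hj with ⟨i, hi, rfl⟩
      exact hmem i (Finset.mem_range.mp hi)
    · rw [Finset.card_image_of_injOn]
      · simp; exact hNdef.ge
      · intro i hi j hj hij
        exact hinj i j (Finset.mem_range.mp hi) (Finset.mem_range.mp hj) hij
  have key : ∀ m : ℕ, 1 ≤ m → m ≤ N → cbar (e (m - 1)) ≤ T m →
      (m = N ∨ T m < cbar (e m)) → tstar = T m := by
    intro m h1 h2 h3 h4
    have hm0 : (0:ℝ) < m := by exact_mod_cast h1
    have hsum : (m:ℝ) * T m = (∑ i ∈ Finset.range m, cbar (e i)) + θ := by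
      rw [hT]; field_simp
    have hfilter : y.filter (fun j => cbar j ≤ T m) = (Finset.range m).image e := by
      ext j
      simp only [Finset.mem_filter, Finset.mem_image, Finset.mem_range]
      constructor
      · rintro ⟨hjy, hjt⟩
        have hj' : j ∈ (Finset.range N).image e := himage ▸ hjy
        rcases Finset.mem_image.mp hj' with ⟨i, hi, rfl⟩
        have hi' := Finset.mem_range.mp hi
        refine ⟨i, ?_, rfl⟩
        by_contra hge
        push_neg at hge
        rcases h4 with h4 | h4
        · omega
        · have := hmono m i hge hi'
          linarith
      · rintro ⟨i, hi, rfl⟩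
        refine ⟨hmem i (lt_of_lt_of_le hi h2), ?_⟩
        have := hmono i (m - 1) (by omega) (by omega)
        linarith
    have hinjm : ∀ i ∈ Finset.range m, ∀ j ∈ Finset.range m, e i = e j → i = j := by
      intro i hi j hj hij
      exact hinj i j (lt_of_lt_of_le (Finset.mem_range.mp hi) h2)
        (lt_of_lt_of_le (Finset.mem_range.mp hj) h2) hij
    have hsum2 : ∑ j ∈ (Finset.range m).image e, (T m - cbar j)
        = ∑ i ∈ Finset.range m, (T m - cbar (e i)) := Finset.sum_image hinjm
    have hval : ∑ i ∈ Finset.range m, (T m - cbar (e i)) = θ := by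
      rw [Finset.sum_sub_distrib, Finset.sum_const, Finset.card_range, nsmul_eq_mul]
      linarith [hsum]
    have hle : T m ≤ tstar := by
      apply ht.2
      show ∑ j ∈ y.filter (fun j => cbar j ≤ T m), (T m - cbar j) ≤ θ
      rw [hfilter, hsum2, hval]
    have hge : tstar ≤ T m := by
      by_contra hlt
      push_neg at hlt
      have hsub : (Finset.range m).image e ⊆ y.filter (fun j => cbar j ≤ tstar) := by
        intro j hj
        rcases Finset.mem_image.mp hj with ⟨i, hi, rfl⟩
        have hi' := Finset.mem_range.mp hi
        refine Finset.mem_filter.mpr ⟨hmem i (lt_of_lt_of_le hi' h2), ?_⟩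
        have := hmono i (m - 1) (by omega) (by omega)
        linarith
      have hbig : ∑ j ∈ (Finset.range m).image e, (tstar - cbar j)
          ≤ ∑ j ∈ y.filter (fun j => cbar j ≤ tstar), (tstar - cbar j) := by
        apply Finset.sum_le_sum_of_subset_of_nonneg hsub
        intro j hjy _
        have := (Finset.mem_filter.mp hjy).2
        linarith
      have hsum3 : ∑ j ∈ (Finset.range m).image e, (tstar - cbar j)
          = ∑ i ∈ Finset.range m, (tstar - cbar (e i)) := Finset.sum_image hinjm
      have hval2 : ∑ i ∈ Finset.range m, (tstar - cbar (e i))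
          = (m:ℝ) * tstar - ∑ i ∈ Finset.range m, cbar (e i) := by
        rw [Finset.sum_sub_distrib, Finset.sum_const, Finset.card_range, nsmul_eq_mul]
      have htop := ht.1
      have hmem' : ∑ j ∈ y.filter (fun j => cbar j ≤ tstar), (tstar - cbar j) ≤ θ := htop
      nlinarith [hsum]
    linarith
  -- existence via Nat.findGreatest
  set P : ℕ → Prop := fun m => 1 ≤ m ∧ cbar (e (m - 1)) ≤ T m with hPdef
  have hP1 : P 1 := by
    refine ⟨le_refl 1, ?_⟩
    rw [hT]
    simp [Finset.sum_range_one]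
    linarith
  set M := Nat.findGreatest P N with hMdef
  have hPM : P M := Nat.findGreatest_spec hN hP1
  have hMN : M ≤ N := Nat.findGreatest_le N
  have hsand : M = N ∨ T M < cbar (e M) := by
    rcases eq_or_lt_of_le hMN with h | h
    · exact Or.inl h
    · right
      have hnot : ¬ P (M + 1) := Nat.findGreatest_is_greatest (Nat.lt_succ_self M) h
      have h2 : T (M + 1) < cbar (e M) := by
        by_contra hc
        push_neg at hc
        exact hnot ⟨by omega, by simpa using hc⟩
      have hM1 : (0:ℝ) < M := by exact_mod_cast hPM.1
      rw [hT] at h2 ⊢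
      simp only [Finset.sum_range_succ] at h2
      rw [div_lt_iff₀ (by positivity)] at h2
      rw [div_lt_iff₀ hM1]
      push_cast at h2 ⊢
      nlinarith
  have hQM : 1 ≤ M ∧ M ≤ N ∧ cbar (e (M - 1)) ≤ T M ∧ (M = N ∨ T M < cbar (e M)) :=
    ⟨hPM.1, hMN, hPM.2, hsand⟩
  have huniq : ∀ m m' : ℕ,
      (1 ≤ m ∧ m ≤ N ∧ cbar (e (m - 1)) ≤ T m ∧ (m = N ∨ T m < cbar (e m))) →
      (1 ≤ m' ∧ m' ≤ N ∧ cbar (e (m' - 1)) ≤ T m' ∧ (m' = N ∨ T m' < cbar (e m'))) →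
      m < m' → False := by
    intro m m' hm hm' hlt
    have hmN : m < N := lt_of_lt_of_le hlt hm'.2.1
    have h4 : T m < cbar (e m) := by
      rcases hm.2.2.2 with h | h
      · omega
      · exact h
    have ht1 := key m hm.1 hm.2.1 hm.2.2.1 hm.2.2.2
    have ht2 := key m' hm'.1 hm'.2.1 hm'.2.2.1 hm'.2.2.2
    have hmono' := hmono m (m' - 1) (by omega) (by omega)
    have := hm'.2.2.1
    linarith
  constructor
  · refine ⟨M, hQM, ?_⟩
    intro m' hm'
    rcases lt_trichotomy m' M with h | h | h
    · exact absurd (huniq m' M hm' hQM h) (fun x => x)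
    · exact h
    · exact absurd (huniq M m' hQM hm' h) (fun x => x)
  · intro m hm
    exact key m hm.1 hm.2.1 hm.2.2.1 hm.2.2.2
end

section
/- Let c̄^1,...,c̄^N ∈ ℝ^n and let v_D^{SAA}(x) = (1/N) Σ_{k∈[N]} max_{j∈x} c̄^k_j for nonempty x ⊆ [n]. For the ∞-Wasserstein ambiguity set with ℓ_r norm and radius θ, the worst-case distribution for a fixed x, i.e., an optimizer of sup_{ℙ∈ℙ_∞} E_ℙ[max_{j∈x} c̃_j], is given by the discrete distribution placing mass 1/N at points c^k_* where c^k_{*,ℓ} = c̄^k_ℓ + θ for one index ℓ ∈ argmax_{j∈x} c̄^k_j and c^k_{*,j} = c̄^k_j otherwise; its expected value equals v_D^{SAA}(x) + θ. -/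
lemma sSup_image_finset {n : ℕ} (x : Finset (Fin n)) (f : Fin n → ℝ) (ℓ : Fin n)
    (hmem : ℓ ∈ x) (hmax : ∀ j ∈ x, f j ≤ f ℓ) : sSup (f '' ↑x) = f ℓ := by
  apply IsGreatest.csSup_eq
  constructor
  · exact ⟨ℓ, hmem, rfl⟩
  · rintro y ⟨j, hj, rfl⟩
    exact hmax j hj

/-- Worst-case distribution for DRBCP-D at a fixed `x`: perturbing, in
each scenario `k`, one coordinate `ℓ k ∈ argmax_{j∈x} c̄^k_j` by `+θ` gives a feasible
ensemble (`‖c^k_* − c̄^k‖_r = θ`) whose expected bottleneck value `v_D^{SAA}(x) + θ`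
is the supremum over the ∞-Wasserstein ambiguity set. -/
theorem drbcp_d_worst_case_distribution (n N : ℕ) (hN : 0 < N)
    (x : Finset (Fin n)) (hx : x.Nonempty)
    (cbar : Fin N → Fin n → ℝ) (θ r : ℝ) (hθ : 0 ≤ θ) (hr : 1 ≤ r)
    (ℓ : Fin N → Fin n) (hℓmem : ∀ k, ℓ k ∈ x)
    (hℓmax : ∀ k, ∀ j ∈ x, cbar k j ≤ cbar k (ℓ k))
    (cstar : Fin N → Fin n → ℝ)
    (hcstar : ∀ k j, cstar k j = if j = ℓ k then cbar k j + θ else cbar k j)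
    (vSAA : ℝ)
    (hvSAA : vSAA = (1 / N : ℝ) * ∑ k : Fin N, sSup (cbar k '' ↑x)) :
    (∀ k, lpNorm r (fun j => cstar k j - cbar k j) = θ) ∧
    (1 / N : ℝ) * ∑ k : Fin N, sSup (cstar k '' ↑x) = vSAA + θ ∧
    IsGreatest
      {e : ℝ | ∃ c : Fin N → Fin n → ℝ,
        (∀ k, lpNorm r (fun j => c k j - cbar k j) ≤ θ) ∧
        e = (1 / N : ℝ) * ∑ k : Fin N, sSup (c k '' ↑x)}
      ((1 / N : ℝ) * ∑ k : Fin N, sSup (cstar k '' ↑x)) := by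
  have hr0 : 0 < r := lt_of_lt_of_le one_pos hr
  -- Part 1: feasibility
  have h1 : ∀ k, lpNorm r (fun j => cstar k j - cbar k j) = θ := by
    intro k
    have hsum : (∑ j, |cstar k j - cbar k j| ^ r) = θ ^ r := by
      rw [Finset.sum_eq_single (ℓ k)]
      · rw [hcstar k (ℓ k), if_pos rfl, add_sub_cancel_left, abs_of_nonneg hθ]
      · intro j _ hj
        rw [hcstar k j, if_neg hj, sub_self, abs_zero, Real.zero_rpow (ne_of_gt hr0)]
      · intro h; exact absurd (Finset.mem_univ _) h
    rw [lpNorm, hsum, ← Real.rpow_mul hθ, mul_one_div_cancel (ne_of_gt hr0), Real.rpow_one]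
  -- sSup computations
  have hsup_star : ∀ k, sSup (cstar k '' ↑x) = cbar k (ℓ k) + θ := by
    intro k
    have : sSup (cstar k '' ↑x) = cstar k (ℓ k) := by
      apply sSup_image_finset x _ _ (hℓmem k)
      intro j hj
      rw [hcstar k j, hcstar k (ℓ k), if_pos rfl]
      split_ifs with h
      · subst h; exact le_refl _
      · exact le_add_of_le_of_nonneg (hℓmax k j hj) hθ
    rw [this, hcstar k (ℓ k), if_pos rfl]
  have hsup_bar : ∀ k, sSup (cbar k '' ↑x) = cbar k (ℓ k) :=
    fun k => sSup_image_finset x _ _ (hℓmem k) (hℓmax k)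
  have hNne : (N : ℝ) ≠ 0 := Nat.cast_ne_zero.mpr (ne_of_gt hN)
  -- Part 2
  have h2 : (1 / N : ℝ) * ∑ k : Fin N, sSup (cstar k '' ↑x) = vSAA + θ := by
    simp only [hsup_star, hvSAA, hsup_bar, Finset.sum_add_distrib, Finset.sum_const,
      Finset.card_univ, Fintype.card_fin, nsmul_eq_mul, mul_add]
    field_simp
  refine ⟨h1, h2, ⟨⟨cstar, fun k => le_of_eq (h1 k), rfl⟩, ?_⟩⟩
  rintro e ⟨c, hc, rfl⟩
  have hbound : ∀ k, sSup (c k '' ↑x) ≤ sSup (cstar k '' ↑x) := by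
    intro k
    rw [hsup_star]
    apply csSup_le (hx.to_set.image _)
    rintro y ⟨j, hj, rfl⟩
    have h3 : |c k j - cbar k j| ≤ θ := (abs_le_lpNorm hr _ j).trans (hc k)
    have : c k j ≤ cbar k j + θ := by
      have := (abs_le.mp h3).2; linarith
    exact this.trans (add_le_add (hℓmax k j hj) le_rfl)
  have : ∑ k : Fin N, sSup (c k '' ↑x) ≤ ∑ k : Fin N, sSup (cstar k '' ↑x) :=
    Finset.sum_le_sum (fun k _ => hbound k)
  apply mul_le_mul_of_nonneg_left this (by positivity)
end
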